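/- Up to global phase, the GHZ state (|000⟩ − |111⟩)/√2 is the unique unit vector |ψ⟩ ∈ (ℂ²)^⊗3 satisfying (σx⊗σy⊗σy + σy⊗σx⊗σy + σy⊗σy⊗σx − σx⊗σx⊗σx)|ψ⟩ = 4|ψ⟩. -/

import Mathlib

open Kronecker Matrix

noncomputable def sigmaX : Matrix (Fin 2) (Fin 2) ℂ := !![0, 1; 1, 0]
noncomputable def sigmaY : Matrix (Fin 2) (Fin 2) ℂ := !![0, -Complex.I; Complex.I, 0]

/-- The three-qubit GHZ state (|000⟩ − |111⟩)/√2. -/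
noncomputable def ghz : (Fin 2 × Fin 2) × Fin 2 → ℂ :=  fun p =>
  if p = ((0, 0), 0) then ((Real.sqrt 2)⁻¹ : ℝ)
  else if p = ((1, 1), 1) then -((Real.sqrt 2)⁻¹ : ℝ)
  else 0

lemma ghz_val0 : ghz ((0,0),0) = ((Real.sqrt 2)⁻¹ : ℝ) := by
  unfold ghz; rw [if_pos rfl]

lemma ghz_val7 : ghz ((1,1),1) = -((Real.sqrt 2)⁻¹ : ℝ) := by
  unfold ghz; rw [if_neg (by decide), if_pos rfl]

lemma ghz_val_other : ∀ p, p ≠ ((0,0),0) → p ≠ ((1,1),1) → ghz p = 0 := by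
  intro p hh1 hh2; unfold ghz; rw [if_neg hh1, if_neg hh2]

set_option maxHeartbeats 1600000 in
/-- Up to global phase, the GHZ state is the unique unit vector ψ in (ℂ²)^⊗3
with (σx⊗σy⊗σy + σy⊗σx⊗σy + σy⊗σy⊗σx − σx⊗σx⊗σx) ψ = 4 ψ. -/
theorem ghz_unique_max_eigenvector (ψ : (Fin 2 × Fin 2) × Fin 2 → ℂ)
    (hnorm : ∑ p, Complex.normSq (ψ p) = 1)
    (heig : (sigmaX ⊗ₖ sigmaY ⊗ₖ sigmaY + sigmaY ⊗ₖ sigmaX ⊗ₖ sigmaY +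
        sigmaY ⊗ₖ sigmaY ⊗ₖ sigmaX - sigmaX ⊗ₖ sigmaX ⊗ₖ sigmaX).mulVec ψ
        = (4 : ℂ) • ψ) :
    ∃ c : ℂ, ‖c‖ = 1 ∧ ψ = c • ghz := by
  have hq : ∀ p, ((sigmaX ⊗ₖ sigmaY ⊗ₖ sigmaY + sigmaY ⊗ₖ sigmaX ⊗ₖ sigmaY +
      sigmaY ⊗ₖ sigmaY ⊗ₖ sigmaX - sigmaX ⊗ₖ sigmaX ⊗ₖ sigmaX).mulVec ψ) p
      = (4 : ℂ) * ψ p := fun p => congrFun heig p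
  have e0 := hq ((0,0),0)
  have e1 := hq ((0,0),1)
  have e2 := hq ((0,1),0)
  have e3 := hq ((0,1),1)
  have e4 := hq ((1,0),0)
  have e5 := hq ((1,0),1)
  have e6 := hq ((1,1),0)
  have e7 := hq ((1,1),1)
  simp only [Matrix.mulVec, dotProduct, Fintype.sum_prod_type, Fin.sum_univ_two,
    Matrix.add_apply, Matrix.sub_apply, Matrix.kroneckerMap_apply, sigmaX, sigmaY,
    Matrix.of_apply, Matrix.cons_val', Matrix.cons_val_zero, Matrix.cons_val_one,
    Matrix.head_cons, Matrix.empty_val', Matrix.cons_val_fin_one,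
    Matrix.head_fin_const] at e0 e1 e2 e3 e4 e5 e6 e7
  have h1 : ψ ((0,0),1) = 0 := by
    linear_combination -e1/4 - (ψ ((1,1),0)/4) * Complex.I_mul_I
  have h2 : ψ ((0,1),0) = 0 := by
    linear_combination -e2/4 - (ψ ((1,0),1)/4) * Complex.I_mul_I
  have h3 : ψ ((0,1),1) = 0 := by
    linear_combination -e3/4 - (ψ ((1,0),0)/4) * Complex.I_mul_I
  have h4 : ψ ((1,0),0) = 0 := by
    linear_combination -e4/4 - (ψ ((0,1),1)/4) * Complex.I_mul_I
  have h5 : ψ ((1,0),1) = 0 := by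
    linear_combination -e5/4 - (ψ ((0,1),0)/4) * Complex.I_mul_I
  have h6 : ψ ((1,1),0) = 0 := by
    linear_combination -e6/4 - (ψ ((0,0),1)/4) * Complex.I_mul_I
  have h7 : ψ ((1,1),1) = - ψ ((0,0),0) := by
    linear_combination -e7/4 + (3 * ψ ((0,0),0) / 4) * Complex.I_mul_I
  rw [Fintype.sum_prod_type] at hnorm
  simp only [Fintype.sum_prod_type, Fin.sum_univ_two] at hnorm
  rw [h1, h2, h3, h4, h5, h6, h7] at hnorm
  simp only [Complex.normSq_zero, Complex.normSq_neg, add_zero, zero_add] at hnorm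
  set a := ψ ((0,0),0) with ha
  have hnsq : Complex.normSq a = 1/2 := by linarith
  have s2 : (0:ℝ) < Real.sqrt 2 := Real.sqrt_pos.2 (by norm_num)
  have s2sq : (Real.sqrt 2) * (Real.sqrt 2) = 2 := Real.mul_self_sqrt (by norm_num)
  refine ⟨a * (Real.sqrt 2 : ℝ), ?_, ?_⟩
  · have habs : ‖a‖ * ‖a‖ = (Real.sqrt 2)⁻¹ * (Real.sqrt 2)⁻¹ := by
      rw [← sq, Complex.sq_norm, hnsq, ← mul_inv, s2sq]; norm_num
    have habs' : ‖a‖ = (Real.sqrt 2)⁻¹ := by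
      rw [← Real.sqrt_mul_self (norm_nonneg a), habs,
        Real.sqrt_mul_self (le_of_lt (inv_pos.2 s2))]
    rw [norm_mul, habs', Complex.norm_real, Real.norm_eq_abs, abs_of_nonneg s2.le,
      inv_mul_cancel₀ s2.ne']
  · have hs2ne : ((Real.sqrt 2 : ℝ) : ℂ) ≠ 0 := by exact_mod_cast s2.ne'
    funext p
    by_cases hp0 : p = ((0,0),0)
    · subst hp0
      rw [Pi.smul_apply, ghz_val0, smul_eq_mul, ← ha]
      push_cast
      rw [mul_assoc, mul_inv_cancel₀ hs2ne, mul_one]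
    · by_cases hp7 : p = ((1,1),1)
      · subst hp7
        rw [Pi.smul_apply, ghz_val7, smul_eq_mul, h7]
        push_cast
        rw [mul_neg, mul_assoc, mul_inv_cancel₀ hs2ne, mul_one]
      · rw [Pi.smul_apply, ghz_val_other p hp0 hp7, smul_eq_mul, mul_zero]
        obtain ⟨⟨i, j⟩, k⟩ := p
        fin_cases i <;> fin_cases j <;> fin_cases k <;>
          first
            | exact absurd rfl hp0
            | exact absurd rfl hp7
            | exact h1
            | exact h2
            | exact h3
            | exact h4
            | exact h5
            | exact h6
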